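/- Let f₁,…,f_n be monotone linear functions. A permutation σ of [n] is locally optimal if and only if for all integers ℓ,m,r with 1≤ℓ≤m<r≤n such that both g = f_{σ(m)}∘⋯∘f_{σ(ℓ)} and h = f_{σ(r)}∘⋯∘f_{σ(m+1)} are non-identical, one has θ(h) − θ(g) ∈ [0,π]_{2π}. -/

import Mathlib

/-- A linear function `x ↦ a*x + b`. -/
structure LinFun where
  a : ℝ
  b : ℝ

namespace LinFun

/-- Evaluation of a linear function. -/
def eval (f : LinFun) (x : ℝ) : ℝ := f.a * x + f.b

/-- Composition: `h.comp g` is the linear function `x ↦ h (g x)`. -/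
def comp (h g : LinFun) : LinFun := ⟨h.a * g.a, h.a * g.b + h.b⟩

/-- The identical linear function `x ↦ x`. -/
def idf : LinFun := ⟨1, 0⟩

/-- `f` is the identical function (equivalently, its vector `(β f, 1 - α f)` is `(0,0)`,
i.e. its angle is `⊥`). -/
def IsId (f : LinFun) : Prop := f = idf

/-- The Euclidean norm of the vector `(β f, 1 - α f)` associated to `f`. -/
noncomputable def vecNorm (f : LinFun) : ℝ := Real.sqrt (f.b ^ 2 + (1 - f.a) ^ 2)

/-- The polar angle in `[0, 2π)` of the vector `(β f, 1 - α f)` associated to `f`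
(meaningful only when `f` is not identical). -/
noncomputable def theta (f : LinFun) : ℝ :=
  if 0 ≤ Complex.arg ⟨f.b, 1 - f.a⟩ then Complex.arg ⟨f.b, 1 - f.a⟩
  else Complex.arg ⟨f.b, 1 - f.a⟩ + 2 * Real.pi

end LinFun

/-- Congruence of angles modulo `2π`: `x ≡_{2π} y`. -/
def Cong (x y : ℝ) : Prop := ∃ k : ℤ, x - y = 2 * Real.pi * k

/-- The set `[t1, t2]_{2π}`. -/
def Icc2pi (t1 t2 : ℝ) : Set ℝ :=
  {θ | ∃ l1 l2 : ℝ, Cong l1 t1 ∧ Cong l2 t2 ∧ 0 ≤ l2 - l1 ∧ l2 - l1 < 2 * Real.pi ∧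
    θ ∈ Set.Icc l1 l2}

/-- The set `(t1, t2)_{2π}`. -/
def Ioo2pi (t1 t2 : ℝ) : Set ℝ :=
  {θ | ∃ l1 l2 : ℝ, Cong l1 t1 ∧ Cong l2 t2 ∧ 0 ≤ l2 - l1 ∧ l2 - l1 < 2 * Real.pi ∧
    θ ∈ Set.Ioo l1 l2}

/-- Composite of a list of linear functions: `compList [g₁, …, g_m] = g_m ∘ ⋯ ∘ g₁`. -/
def compList (L : List LinFun) : LinFun := L.foldl (fun acc g => g.comp acc) LinFun.idf

/-- The list `f_{σ(1)}, …, f_{σ(n)}` (0-indexed positions). -/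
def permList {n : ℕ} (f : Fin n → LinFun) (σ : Equiv.Perm (Fin n)) : List LinFun :=
  List.ofFn fun i => f (σ i)

/-- `f^σ = f_{σ(n)} ∘ ⋯ ∘ f_{σ(1)}`. -/
def permComp {n : ℕ} (f : Fin n → LinFun) (σ : Equiv.Perm (Fin n)) : LinFun :=
  compList (permList f σ)

/-- The composite of the functions at the (0-indexed) positions `a, a+1, …, b` of `σ`:
`f_{σ(b)} ∘ ⋯ ∘ f_{σ(a)}` (in 0-indexed notation). -/
def segComp {n : ℕ} (f : Fin n → LinFun) (σ : Equiv.Perm (Fin n)) (a b : ℕ) : LinFun :=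
  compList (((permList f σ).drop a).take (b + 1 - a))

/-- The composite corresponding to the `k`-shift `σ_k` of `σ`:
`f^{σ_k} = f_{σ(k)} ∘ ⋯ ∘ f_{σ(1)} ∘ f_{σ(n)} ∘ ⋯ ∘ f_{σ(k+1)}` (1-indexed notation). -/
def shiftComp {n : ℕ} (f : Fin n → LinFun) (σ : Equiv.Perm (Fin n)) (k : ℕ) : LinFun :=
  compList ((permList f σ).rotate k)

/-- `σ` is a minimum (optimal) permutation for `f₁, …, f_n`. -/
def IsMinimum {n : ℕ} (f : Fin n → LinFun) (σ : Equiv.Perm (Fin n)) : Prop :=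
  ∀ ρ : Equiv.Perm (Fin n), (permComp f σ).b ≤ (permComp f ρ).b

/-- `μ` belongs to the neighbourhood `N(σ)`: it is obtained from `σ` by swapping two
adjacent blocks of positions, `(l, …, m)` and `(m+1, …, r)` (0-indexed, `l ≤ m < r < n`). -/
def InNbhd {n : ℕ} (σ μ : Equiv.Perm (Fin n)) : Prop :=
  ∃ (l m r : ℕ) (_ : l ≤ m) (_ : m < r) (_ : r < n),
    (∀ i : Fin n, (i.val < l ∨ r < i.val) → μ i = σ i) ∧
    (∀ i : Fin n, ∀ _ : l ≤ i.val, ∀ _ : i.val < l + r - m,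
      μ i = σ ⟨i.val + m + 1 - l, by omega⟩) ∧
    (∀ i : Fin n, ∀ _ : l + r - m ≤ i.val, ∀ _ : i.val ≤ r,
      μ i = σ ⟨i.val + m - r, by omega⟩)

/-- `σ` is locally optimal for `f₁, …, f_n`. -/
def LocallyOptimal {n : ℕ} (f : Fin n → LinFun) (σ : Equiv.Perm (Fin n)) : Prop :=
  ∀ μ : Equiv.Perm (Fin n), InNbhd σ μ → (permComp f σ).b ≤ (permComp f μ).b

/-- `σ` is counterclockwise: ignoring the identical functions, some rotation of the sequence
of angles `θ(f_{σ(1)}), …, θ(f_{σ(n)})` is nondecreasing. -/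
def Counterclockwise {n : ℕ} (f : Fin n → LinFun) (σ : Equiv.Perm (Fin n)) : Prop :=
  ∃ c : ℕ, ∀ i j : Fin n, ¬ (f (σ i)).IsId → ¬ (f (σ j)).IsId →
    ((c ≤ i.val ∧ i ≤ j) ∨ (i ≤ j ∧ j.val < c) ∨ (c ≤ i.val ∧ j.val < c)) →
    (f (σ i)).theta ≤ (f (σ j)).theta

/-- `f₁, …, f_n` are colinear: all vectors lie on one line through the origin. -/
def Colinear {n : ℕ} (f : Fin n → LinFun) : Prop :=
  ∃ lam : ℝ, ∀ i : Fin n,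
    (f i).IsId ∨ Cong ((f i).theta) lam ∨ Cong ((f i).theta) (lam + Real.pi)

/-- `f₁, …, f_n` are potentially identical: some counterclockwise permutation composes
to the identical function. -/
def PotentiallyIdentical {n : ℕ} (f : Fin n → LinFun) : Prop :=
  ∃ σ : Equiv.Perm (Fin n), Counterclockwise f σ ∧ (permComp f σ).IsId

/-- The ε-perturbation `f^{(ε)}` of a linear function. -/
noncomputable def epsPert (f : LinFun) (ε : ℝ) : LinFun := if f.a = 0 then ⟨ε, f.b⟩ else f


/- ===== Auxiliary lemmas ===== -/

section Aux

open Real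

lemma mem_Icc2pi_iff_sin_nonneg (x : ℝ) : x ∈ Icc2pi 0 Real.pi ↔ 0 ≤ Real.sin x := by
  have hpi := Real.pi_pos
  constructor
  · rintro ⟨l1, l2, ⟨k1, hk1⟩, ⟨k2, hk2⟩, h0, h2, hx1, hx2⟩
    have hd : l2 - l1 = π + 2*π*((k2:ℝ) - k1) := by push_cast at *; linarith
    have hk : k2 = k1 := by
      have hlt : ((k2:ℝ) - k1) < 1 := by nlinarith
      have hgt : (-1:ℝ) < ((k2:ℝ) - k1) := by nlinarith
      have h5 : (k2 - k1 : ℤ) < 1 := by exact_mod_cast (by push_cast; linarith : ((k2 - k1 : ℤ):ℝ) < 1)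
      have h6 : (-1 : ℤ) < (k2 - k1 : ℤ) := by exact_mod_cast (by push_cast; linarith : ((-1:ℤ):ℝ) < ((k2 - k1 : ℤ):ℝ))
      omega
    subst hk
    have h1 : l1 = 2 * π * k2 := by linarith
    have h2' : l2 = π + 2 * π * k2 := by linarith
    have hsx : Real.sin (x + (-k2:ℤ) * (2*π)) = Real.sin x := Real.sin_add_int_mul_two_pi x (-k2)
    rw [← hsx]
    apply Real.sin_nonneg_of_nonneg_of_le_pi
    · rw [h1] at hx1; push_cast; linarith
    · rw [h2'] at hx2; push_cast; linarith
  · intro hs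
    set k := ⌊x / (2*π)⌋ with hk
    have h2p : (0:ℝ) < 2*π := by linarith
    have h1 : 2*π*k ≤ x := by
      have := Int.floor_le (x / (2*π))
      calc 2*π*(k:ℝ) = (k:ℝ) * (2*π) := by ring
        _ ≤ (x/(2*π)) * (2*π) := by apply mul_le_mul_of_nonneg_right this; linarith
        _ = x := by field_simp
    have h2 : x < 2*π*k + 2*π := by
      have h := Int.lt_floor_add_one (x / (2*π))
      have h' : x / (2*π) * (2*π) < ((k:ℝ)+1) * (2*π) := by
        apply mul_lt_mul_of_pos_right h h2p
      have hx : x = x / (2*π) * (2*π) := by field_simp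
      nlinarith
    have hy : x ≤ 2*π*k + π := by
      by_contra hc
      push_neg at hc
      have hsy : Real.sin x = Real.sin (x - 2*π*k) := by
        conv_lhs => rw [show x = (x - 2*π*k) + (k:ℝ)*(2*π) by ring]
        exact_mod_cast Real.sin_add_int_mul_two_pi (x - 2*π*k) k
      have hsy2 : Real.sin (x - 2*π*k) = -Real.sin (x - 2*π*k - π) := by
        have h := Real.sin_add_pi (x - 2*π*(k:ℝ) - π)
        rw [show x - 2*π*(k:ℝ) - π + π = x - 2*π*(k:ℝ) by ring] at h
        exact h
      have hpos : 0 < Real.sin (x - 2*π*k - π) :=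
        Real.sin_pos_of_pos_of_lt_pi (by linarith) (by linarith)
      nlinarith [hsy, hsy2]
    exact ⟨2*π*k, 2*π*k + π, ⟨k, by ring⟩, ⟨k, by push_cast; ring⟩, by linarith, by linarith, h1, hy⟩

lemma vec_ne_zero {g : LinFun} (h : ¬ g.IsId) : (⟨g.b, 1 - g.a⟩ : ℂ) ≠ 0 := by
  intro hz
  rw [Complex.ext_iff] at hz
  simp only [Complex.zero_re, Complex.zero_im] at hz
  apply h
  cases g with
  | mk a b => simp only [LinFun.IsId, LinFun.idf, LinFun.mk.injEq]; constructor <;> [skip; skip] <;>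
      (simp at hz ⊢; try linarith [hz.1, hz.2])

lemma sin_theta_diff (g h : LinFun) (hg : ¬ g.IsId) (hh : ¬ h.IsId) :
    Real.sin (h.theta - g.theta)
      = (g.b * (1 - h.a) - (1 - g.a) * h.b) /
        (‖(⟨g.b, 1 - g.a⟩ : ℂ)‖ * ‖(⟨h.b, 1 - h.a⟩ : ℂ)‖) := by
  set u : ℂ := ⟨g.b, 1 - g.a⟩ with hu
  set v : ℂ := ⟨h.b, 1 - h.a⟩ with hv
  have hu0 : u ≠ 0 := vec_ne_zero hg
  have hv0 : v ≠ 0 := vec_ne_zero hh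
  have hau : (0:ℝ) < ‖u‖ := norm_pos_iff.mpr hu0
  have hav : (0:ℝ) < ‖v‖ := norm_pos_iff.mpr hv0
  have key : Real.sin (h.theta - g.theta) = Real.sin (v.arg - u.arg) := by
    unfold LinFun.theta
    rw [← hu, ← hv]
    rcases le_or_gt 0 u.arg with h1 | h1 <;> rcases le_or_gt 0 v.arg with h2 | h2 <;>
      simp [h1, h2, not_le.2, le_of_lt] <;>
    · first
      | rfl
      | (rw [show v.arg + 2*π - u.arg = (v.arg - u.arg) + (1:ℤ)*(2*π) by push_cast; ring,
            Real.sin_add_int_mul_two_pi])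
      | (rw [show v.arg - (u.arg + 2*π) = (v.arg - u.arg) + (-1:ℤ)*(2*π) by push_cast; ring,
            Real.sin_add_int_mul_two_pi])
  rw [key, Real.sin_sub, Complex.sin_arg, Complex.sin_arg, Complex.cos_arg hu0, Complex.cos_arg hv0]
  have h1 : u.re = g.b := rfl
  have h2 : u.im = 1 - g.a := rfl
  have h3 : v.re = h.b := rfl
  have h4 : v.im = 1 - h.a := rfl
  rw [h1, h2, h3, h4]
  field_simp

/-- The key equivalence between the angle condition and the cross-product condition. -/
lemma theta_diff_mem_iff (g h : LinFun) (hg : ¬ g.IsId) (hh : ¬ h.IsId) :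
    h.theta - g.theta ∈ Icc2pi 0 Real.pi ↔
      0 ≤ g.b * (1 - h.a) - (1 - g.a) * h.b := by
  rw [mem_Icc2pi_iff_sin_nonneg, sin_theta_diff g h hg hh]
  have hau : (0:ℝ) < ‖(⟨g.b, 1 - g.a⟩ : ℂ)‖ := norm_pos_iff.mpr (vec_ne_zero hg)
  have hav : (0:ℝ) < ‖(⟨h.b, 1 - h.a⟩ : ℂ)‖ := norm_pos_iff.mpr (vec_ne_zero hh)
  rw [div_nonneg_iff]
  constructor
  · rintro (⟨h1, _⟩ | ⟨_, h2⟩)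
    · exact h1
    · nlinarith
  · intro h1
    exact Or.inl ⟨h1, by positivity⟩

lemma comp_assoc (x y z : LinFun) : (x.comp y).comp z = x.comp (y.comp z) := by
  simp [LinFun.comp]; constructor <;> ring

lemma comp_idf (x : LinFun) : x.comp LinFun.idf = x := by
  simp [LinFun.comp, LinFun.idf]

lemma idf_comp (x : LinFun) : LinFun.idf.comp x = x := by
  simp [LinFun.comp, LinFun.idf]

lemma foldl_comp (L : List LinFun) (x : LinFun) :
    L.foldl (fun acc g => g.comp acc) x = (compList L).comp x := by
  induction L generalizing x with
  | nil => simp [compList, idf_comp]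
  | cons g L ih =>
      simp only [List.foldl_cons, compList] at *
      rw [ih (g.comp x), ih (g.comp LinFun.idf), comp_idf, comp_assoc]

lemma compList_append (A B : List LinFun) :
    compList (A ++ B) = (compList B).comp (compList A) := by
  rw [compList, List.foldl_append, ← compList, foldl_comp]

lemma compList_a_pos (L : List LinFun) (h : ∀ g ∈ L, 0 < g.a) : 0 < (compList L).a := by
  induction L with
  | nil => simp [compList, LinFun.idf]
  | cons g L ih =>
      have hc : compList (g :: L) = (compList L).comp (compList [g]) := compList_append [g] L
      rw [hc]
      have h1 : 0 < (compList L).a := ih (fun x hx => h x (List.mem_cons_of_mem _ hx))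
      have h2 : (compList [g]).a = g.a := by simp [compList, LinFun.comp, LinFun.idf]
      simp only [LinFun.comp]
      rw [h2]
      exact mul_pos h1 (h g List.mem_cons_self)

def swapPermFun (n l m r : ℕ) (hlm : l ≤ m) (hmr : m < r) (hrn : r < n) (i : Fin n) : Fin n :=
  if i.val < l then i
  else if h2 : i.val < l + r - m then ⟨i.val + m + 1 - l, by omega⟩
  else if h3 : i.val ≤ r then ⟨i.val + m - r, by omega⟩
  else i

def swapPermInv (n l m r : ℕ) (hlm : l ≤ m) (hmr : m < r) (hrn : r < n) (j : Fin n) : Fin n :=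
  if j.val < l then j
  else if h2 : j.val ≤ m then ⟨j.val + r - m, by omega⟩
  else if h3 : j.val ≤ r then ⟨j.val + l - (m+1), by omega⟩
  else j

lemma swapPermFun_val (n l m r : ℕ) (hlm : l ≤ m) (hmr : m < r) (hrn : r < n) (i : Fin n) :
    (swapPermFun n l m r hlm hmr hrn i).val =
      if i.val < l then i.val
      else if i.val < l + r - m then i.val + m + 1 - l
      else if i.val ≤ r then i.val + m - r
      else i.val := by
  unfold swapPermFun
  split_ifs <;> rfl

lemma swapPermInv_val (n l m r : ℕ) (hlm : l ≤ m) (hmr : m < r) (hrn : r < n) (j : Fin n) :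
    (swapPermInv n l m r hlm hmr hrn j).val =
      if j.val < l then j.val
      else if j.val ≤ m then j.val + r - m
      else if j.val ≤ r then j.val + l - (m+1)
      else j.val := by
  unfold swapPermInv
  split_ifs <;> rfl

def swapPerm (n l m r : ℕ) (hlm : l ≤ m) (hmr : m < r) (hrn : r < n) : Equiv.Perm (Fin n) where
  toFun := swapPermFun n l m r hlm hmr hrn
  invFun := swapPermInv n l m r hlm hmr hrn
  left_inv := by
    intro i
    apply Fin.ext
    rw [swapPermInv_val, swapPermFun_val]
    have hi := i.isLt
    split_ifs <;> omega
  right_inv := by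
    intro j
    apply Fin.ext
    rw [swapPermFun_val, swapPermInv_val]
    have hj := j.isLt
    split_ifs <;> omega

lemma swapPerm_conds {n : ℕ} (σ : Equiv.Perm (Fin n)) (l m r : ℕ)
    (hlm : l ≤ m) (hmr : m < r) (hrn : r < n) :
    (∀ i : Fin n, (i.val < l ∨ r < i.val) → (σ * swapPerm n l m r hlm hmr hrn) i = σ i) ∧
    (∀ i : Fin n, ∀ _ : l ≤ i.val, ∀ _ : i.val < l + r - m,
      (σ * swapPerm n l m r hlm hmr hrn) i = σ ⟨i.val + m + 1 - l, by omega⟩) ∧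
    (∀ i : Fin n, ∀ _ : l + r - m ≤ i.val, ∀ _ : i.val ≤ r,
      (σ * swapPerm n l m r hlm hmr hrn) i = σ ⟨i.val + m - r, by omega⟩) := by
  refine ⟨?_, ?_, ?_⟩
  · intro i hi
    simp only [Equiv.Perm.mul_apply]
    congr 1
    apply Fin.ext
    rw [show ((swapPerm n l m r hlm hmr hrn) i) = swapPermFun n l m r hlm hmr hrn i from rfl,
      swapPermFun_val]
    split_ifs <;> omega
  · intro i hi1 hi2
    simp only [Equiv.Perm.mul_apply]
    congr 1
    apply Fin.ext
    rw [show ((swapPerm n l m r hlm hmr hrn) i) = swapPermFun n l m r hlm hmr hrn i from rfl,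
      swapPermFun_val]
    show _ = i.val + m + 1 - l
    split_ifs <;> omega
  · intro i hi1 hi2
    simp only [Equiv.Perm.mul_apply]
    congr 1
    apply Fin.ext
    rw [show ((swapPerm n l m r hlm hmr hrn) i) = swapPermFun n l m r hlm hmr hrn i from rfl,
      swapPermFun_val]
    show _ = i.val + m - r
    split_ifs <;> omega

lemma swapPerm_inNbhd {n : ℕ} (σ : Equiv.Perm (Fin n)) (l m r : ℕ)
    (hlm : l ≤ m) (hmr : m < r) (hrn : r < n) :
    InNbhd σ (σ * swapPerm n l m r hlm hmr hrn) := by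
  obtain ⟨c1, c2, c3⟩ := swapPerm_conds σ l m r hlm hmr hrn
  exact ⟨l, m, r, hlm, hmr, hrn, c1, c2, c3⟩

/-- If `μ` satisfies the pointwise conditions of `InNbhd σ μ` with data `l, m, r`,
then its list of functions is the block-swapped list of `σ`'s. -/
lemma permList_of_nbhd {n : ℕ} (f : Fin n → LinFun) (σ μ : Equiv.Perm (Fin n))
    (l m r : ℕ) (hlm : l ≤ m) (hmr : m < r) (hrn : r < n)
    (c1 : ∀ i : Fin n, (i.val < l ∨ r < i.val) → μ i = σ i)
    (c2 : ∀ i : Fin n, ∀ _ : l ≤ i.val, ∀ _ : i.val < l + r - m,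
      μ i = σ ⟨i.val + m + 1 - l, by omega⟩)
    (c3 : ∀ i : Fin n, ∀ _ : l + r - m ≤ i.val, ∀ _ : i.val ≤ r,
      μ i = σ ⟨i.val + m - r, by omega⟩) :
    permList f μ =
      (permList f σ).take l
        ++ (((permList f σ).drop (m+1)).take (r - m)
        ++ ((((permList f σ).drop l).take (m + 1 - l))
        ++ (permList f σ).drop (r+1))) := by
  have hL : (permList f σ).length = n := by simp [permList]
  apply List.ext_getElem
  · simp [permList]; omega
  · intro i hi1 hi2
    have hin : i < n := by simpa [permList] using hi1
    simp only [permList, List.getElem_append, List.length_take, List.length_drop,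
      List.length_ofFn, List.getElem_take, List.getElem_drop, List.getElem_ofFn]
    split_ifs with h1 h2 h3
    · rw [c1 ⟨i, hin⟩ (by simp at h1 ⊢; omega)]
    · rw [c2 ⟨i, hin⟩ (by simp at h1 ⊢; omega) (by simp at h1 h2 ⊢; omega)]
      apply congrArg
      apply congrArg
      apply Fin.ext
      simp at h1 h2 ⊢
      omega
    · rw [c3 ⟨i, hin⟩ (by simp at h1 h2 ⊢; omega) (by simp at h1 h2 h3 ⊢; omega)]
      apply congrArg
      apply congrArg
      apply Fin.ext
      simp at h1 h2 h3 ⊢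
      omega
    · rw [c1 ⟨i, hin⟩ (by simp at h1 h2 h3 ⊢; omega)]
      apply congrArg
      apply congrArg
      apply Fin.ext
      simp at h1 h2 h3 ⊢
      omega

/-- Decomposition of the original list into the four blocks. -/
lemma permList_decomp {n : ℕ} (f : Fin n → LinFun) (σ : Equiv.Perm (Fin n))
    (l m r : ℕ) (hlm : l ≤ m) (hmr : m < r) (hrn : r < n) :
    permList f σ =
      (permList f σ).take l
        ++ ((((permList f σ).drop l).take (m + 1 - l))
        ++ ((((permList f σ).drop (m+1)).take (r - m))
        ++ (permList f σ).drop (r+1))) := by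
  set L := permList f σ with hLdef
  have hL : L.length = n := by simp [hLdef, permList]
  have e2 : ((L.drop (m+1)).take (r - m)) ++ L.drop (r+1) = L.drop (m+1) := by
    have := List.take_append_drop (r - m) (L.drop (m+1))
    rw [List.drop_drop] at this
    rw [show m + 1 + (r - m) = r + 1 by omega] at this
    exact this
  have e1 : ((L.drop l).take (m + 1 - l)) ++ L.drop (m+1) = L.drop l := by
    have := List.take_append_drop (m + 1 - l) (L.drop l)
    rw [List.drop_drop] at this
    rw [show l + (m + 1 - l) = m + 1 by omega] at this
    exact this
  rw [e2, e1, List.take_append_drop]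

end Aux


/-- Key: beta comparison with a neighbour equals the cross-product condition. -/
lemma beta_le_iff_cross {n : ℕ} (f : Fin n → LinFun) (hf : ∀ i, 0 < (f i).a)
    (σ μ : Equiv.Perm (Fin n)) (l m r : ℕ) (hlm : l ≤ m) (hmr : m < r) (hrn : r < n)
    (c1 : ∀ i : Fin n, (i.val < l ∨ r < i.val) → μ i = σ i)
    (c2 : ∀ i : Fin n, ∀ _ : l ≤ i.val, ∀ _ : i.val < l + r - m,
      μ i = σ ⟨i.val + m + 1 - l, by omega⟩)
    (c3 : ∀ i : Fin n, ∀ _ : l + r - m ≤ i.val, ∀ _ : i.val ≤ r,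
      μ i = σ ⟨i.val + m - r, by omega⟩) :
    ((permComp f σ).b ≤ (permComp f μ).b ↔
      0 ≤ (segComp f σ l m).b * (1 - (segComp f σ (m+1) r).a)
            - (1 - (segComp f σ l m).a) * (segComp f σ (m+1) r).b) := by
  have hL : (permList f σ).length = n := by simp [permList]
  have hmem : ∀ g ∈ permList f σ, 0 < g.a := by
    intro g hg
    rw [permList, List.mem_ofFn] at hg
    obtain ⟨i, rfl⟩ := hg
    exact hf _
  set P := compList ((permList f σ).take l) with hP
  set S := compList ((permList f σ).drop (r+1)) with hSdef
  have hS : 0 < S.a :=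
    compList_a_pos _ (fun g hg => hmem g (List.mem_of_mem_drop hg))
  have hseg2 : segComp f σ (m+1) r = compList (((permList f σ).drop (m+1)).take (r - m)) := by
    rw [segComp, show r + 1 - (m+1) = r - m from by omega]
  have hseg1 : segComp f σ l m = compList (((permList f σ).drop l).take (m + 1 - l)) := rfl
  have hσc : permComp f σ =
      ((S.comp (segComp f σ (m+1) r)).comp (segComp f σ l m)).comp P := by
    rw [permComp]
    conv_lhs => rw [permList_decomp f σ l m r hlm hmr hrn]
    rw [compList_append, compList_append, compList_append, hseg1, hseg2]
  have hμc : permComp f μ =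
      ((S.comp (segComp f σ l m)).comp (segComp f σ (m+1) r)).comp P := by
    rw [permComp, permList_of_nbhd f σ μ l m r hlm hmr hrn c1 c2 c3]
    rw [compList_append, compList_append, compList_append, hseg1, hseg2]
  rw [hσc, hμc]
  set g := segComp f σ l m
  set h := segComp f σ (m+1) r
  simp only [LinFun.comp]
  constructor <;> intro hyp <;> nlinarith [hS, hyp]

/-- angle characterization of local optimality. Positions are 0-indexed:
the two adjacent blocks are `l, …, m` and `m+1, …, r` with `l ≤ m < r < n`. -/
theorem stmt5 {n : ℕ} (f : Fin n → LinFun) (hf : ∀ i, 0 < (f i).a)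
    (σ : Equiv.Perm (Fin n)) :
    LocallyOptimal f σ ↔
      ∀ l m r : ℕ, l ≤ m → m < r → r < n →
        ¬ (segComp f σ l m).IsId → ¬ (segComp f σ (m + 1) r).IsId →
        (segComp f σ (m + 1) r).theta - (segComp f σ l m).theta
          ∈ Icc2pi 0 Real.pi := by
  constructor
  · intro hopt l m r hlm hmr hrn hg hh
    obtain ⟨c1, c2, c3⟩ := swapPerm_conds σ l m r hlm hmr hrn
    have hb := hopt _ (swapPerm_inNbhd σ l m r hlm hmr hrn)
    have hcross := (beta_le_iff_cross f hf σ _ l m r hlm hmr hrn c1 c2 c3).1 hb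
    exact (theta_diff_mem_iff _ _ hg hh).2 hcross
  · rintro hang μ ⟨l, m, r, hlm, hmr, hrn, c1, c2, c3⟩
    apply (beta_le_iff_cross f hf σ μ l m r hlm hmr hrn c1 c2 c3).2
    by_cases hg : (segComp f σ l m).IsId
    · rw [show segComp f σ l m = LinFun.idf from hg]
      simp [LinFun.idf]
    · by_cases hh : (segComp f σ (m+1) r).IsId
      · rw [show segComp f σ (m+1) r = LinFun.idf from hh]
        simp [LinFun.idf]
      · exact (theta_diff_mem_iff _ _ hg hh).1 (hang l m r hlm hmr hrn hg hh)
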